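/- The variance of the trace estimator equals Var(X) = Σ_{p=1}^d [ Σ_{s=0}^{N−1} (E[z⁴])^s · ( Σ a²_{j_1,…,j_{N−1},p} ) − a²_{p,…,p} ] + 2·Σ_{1 ≤ q < p ≤ d} [ Σ a_{j_1,…,j_{N−1},p} · a_{k_1,…,k_{N−1},q} − a_{p,…,p} · a_{q,…,q} ], where for each p and s the first inner sum ranges over all tuples (j_1,…,j_{N−1}) ∈ {1,…,d}^{N−1} in which exactly s of the indices j_t are equal to p; the second inner sum ranges over all pairs of tuples (j_1,…,j_{N−1}), (k_1,…,k_{N−1}) with every j_t and every k_t in {p,q} and j_t ≠ k_t for all t; and z is a random variable with the common distribution of the entries g^{(n)}_i. -/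

import Mathlib

open MeasureTheory ProbabilityTheory Finset

/-- The diagonal estimator: `y i = Σ_j a_{j_1,…,j_{N-1},i} ∏_t g^{(t)}_{j_t} g^{(t)}_i`,
where the tensor has order `N = M + 1`. -/
noncomputable def diagEstimator {M d : ℕ} (a : (Fin (M + 1) → Fin d) → ℝ)
    {Ω : Type*} (g : Fin M → Fin d → Ω → ℝ) (i : Fin d) (ω : Ω) : ℝ :=
  ∑ j : Fin M → Fin d, a (Fin.snoc j i) * ∏ t : Fin M, g t (j t) ω * g t i ω

/-- The trace estimator `X = Σ_i y_i`. -/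
noncomputable def traceEstimator {M d : ℕ} (a : (Fin (M + 1) → Fin d) → ℝ)
    {Ω : Type*} (g : Fin M → Fin d → Ω → ℝ) (ω : Ω) : ℝ :=
  ∑ i : Fin d, diagEstimator a g i ω


lemma integral_prod_of_indep {ι Ω : Type*} [Fintype ι] [MeasureSpace Ω] [IsProbabilityMeasure (ℙ : Measure Ω)]
    (f : ι → Ω → ℝ)
    (hindep : iIndepFun f ℙ)
    (hmeas : ∀ i, Measurable (f i)) (hint : ∀ i, Integrable (f i) ℙ) (s : Finset ι) :
    Integrable (fun ω => ∏ i ∈ s, f i ω) ℙ ∧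
      ∫ ω, ∏ i ∈ s, f i ω ∂ℙ = ∏ i ∈ s, ∫ ω, f i ω ∂ℙ := by
  classical
  induction s using Finset.induction_on with
  | empty => simp
  | @insert i s hi ih =>
    have hIF : IndepFun (∏ j ∈ s, f j) (f i) ℙ :=
      hindep.indepFun_finsetProd_of_notMem hmeas hi
    have hps : (∏ j ∈ s, f j) = fun ω => ∏ j ∈ s, f j ω := by
      funext ω; simp
    have hint' : Integrable (fun ω => (∏ j ∈ s, f j ω) * f i ω) ℙ := by
      have := hIF.integrable_mul (hps ▸ ih.1) (hint i)
      rw [hps] at this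
      exact this
    constructor
    · simpa [Finset.prod_insert hi, mul_comm] using hint'
    · have hins : ∀ ω, ∏ j ∈ insert i s, f j ω = f i ω * ∏ j ∈ s, f j ω := by
        intro ω; rw [Finset.prod_insert hi]
      simp only [hins, Finset.prod_insert hi]
      have := hIF.integral_mul_eq_mul_integral (hps ▸ ih.1).aestronglyMeasurable (hint i).aestronglyMeasurable
      simp only [hps, Pi.mul_apply] at this
      calc ∫ ω, f i ω * ∏ j ∈ s, f j ω ∂ℙ
          = ∫ ω, (∏ j ∈ s, f j ω) * f i ω ∂ℙ := by simp [mul_comm]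
        _ = (∫ ω, ∏ j ∈ s, f j ω ∂ℙ) * ∫ ω, f i ω ∂ℙ := this
        _ = (∫ ω, f i ω ∂ℙ) * ∏ j ∈ s, ∫ ω, f j ω ∂ℙ := by rw [ih.2, mul_comm]

section comb
variable {α : Type*} [Fintype α] [DecidableEq α] (m : ℕ → ℝ)

/-- collapse of a 0/1-exponent product -/
lemma prod_pow_ite (x : α → ℝ) (c : α) :
    ∏ r : α, (x r) ^ (if c = r then 1 else 0) = x c := by
  have h : ∀ r : α, (x r) ^ (if c = r then 1 else 0) = if c = r then x r else 1 := by
    intro r; split <;> simp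
  rw [Finset.prod_congr rfl fun r _ => h r, Finset.prod_ite_eq]
  simp

lemma prod_ite_one_zero {ι : Type*} [Fintype ι] (P : ι → Prop) [DecidablePred P] :
    (∏ t : ι, if P t then (1 : ℝ) else 0) = if ∀ t, P t then 1 else 0 := by
  by_cases h : ∀ t, P t
  · rw [if_pos h]; exact Finset.prod_eq_one fun t _ => if_pos (h t)
  · rw [if_neg h]
    push_neg at h
    obtain ⟨t, ht⟩ := h
    exact Finset.prod_eq_zero (Finset.mem_univ t) (if_neg ht)

lemma prod_ite_eq_fun {ι : Type*} [Fintype ι] [DecidableEq (ι → α)] (j k : ι → α) (w : ι → ℝ) :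
    (∏ t : ι, if j t = k t then w t else 0) = if j = k then ∏ t : ι, w t else 0 := by
  by_cases h : j = k
  · subst h; simp
  · rw [if_neg h]
    have : ∃ t, j t ≠ k t := by
      by_contra hc; push_neg at hc; exact h (funext hc)
    obtain ⟨t, ht⟩ := this
    exact Finset.prod_eq_zero (Finset.mem_univ t) (if_neg ht)

variable (hm0 : m 0 = 1) (hm1 : m 1 = 0) (hm2 : m 2 = 1)
include hm0 hm1 hm2

lemma pair_moment (b i : α) :
    ∏ r : α, m ((if b = r then 1 else 0) + (if i = r then 1 else 0)) =
      if b = i then 1 else 0 := by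
  by_cases hbi : b = i
  · subst hbi
    rw [if_pos rfl]
    apply Finset.prod_eq_one
    intro r _
    by_cases h : b = r <;> simp [h, hm0, hm2]
  · rw [if_neg hbi]
    apply Finset.prod_eq_zero (Finset.mem_univ b)
    have h2 : ¬ i = b := fun h => hbi h.symm
    simp [h2, hm1]

lemma quad_diag (p b c : α) :
    ∏ r : α, m (((if b = r then 1 else 0) + (if p = r then 1 else 0)) +
        ((if c = r then 1 else 0) + (if p = r then 1 else 0))) =
      if b = c then (if b = p then m 4 else 1) else 0 := by
  by_cases hbc : b = c
  · subst hbc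
    rw [if_pos rfl]
    by_cases hbp : b = p
    · subst hbp
      rw [if_pos rfl]
      rw [Finset.prod_eq_single b]
      · simp
      · intro r _ hr
        have : ¬ b = r := fun h => hr h.symm
        simp [this, hm0]
      · simp
    · rw [if_neg hbp]
      apply Finset.prod_eq_one
      intro r _
      by_cases h1 : b = r
      · have h2 : ¬ p = r := fun h => hbp (h1.trans h.symm)
        simp [h1, h2, hm2]
      · by_cases h2 : p = r <;> simp [h1, h2, hm0, hm2]
  · rw [if_neg hbc]
    by_cases hbp : b = p
    · -- c ≠ b = p ; witness r = c
      apply Finset.prod_eq_zero (Finset.mem_univ c)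
      have h1 : ¬ b = c := hbc
      have h2 : ¬ p = c := fun h => hbc (hbp.trans h)
      simp [h1, h2, hm1]
    · apply Finset.prod_eq_zero (Finset.mem_univ b)
      have h2 : ¬ p = b := fun h => hbp h.symm
      have h3 : ¬ c = b := fun h => hbc h.symm
      simp [h2, h3, hm1]

lemma quad_off {p q : α} (hpq : p ≠ q) (b c : α) :
    ∏ r : α, m (((if b = r then 1 else 0) + (if p = r then 1 else 0)) +
        ((if c = r then 1 else 0) + (if q = r then 1 else 0))) =
      if (b = p ∧ c = q) ∨ (b = q ∧ c = p) then 1 else 0 := by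
  by_cases hcase : (b = p ∧ c = q) ∨ (b = q ∧ c = p)
  · rw [if_pos hcase]
    apply Finset.prod_eq_one
    intro r _
    rcases hcase with ⟨hb, hc⟩ | ⟨hb, hc⟩ <;> subst hb <;> subst hc <;>
    · by_cases h1 : b = r <;> by_cases h2 : c = r <;>
        first
        | (exfalso; exact hpq (by grind))
        | simp_all [hm0, hm2]
  · rw [if_neg hcase]
    push_neg at hcase
    by_cases hbp : b = p
    · have hcq : ¬ c = q := fun h => hcase.1 hbp h
      by_cases hcp : c = p
      · -- witness q
        apply Finset.prod_eq_zero (Finset.mem_univ q)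
        have h1 : ¬ b = q := fun h => hpq (hbp.symm.trans h)
        have h2 : ¬ p = q := hpq
        have h3 : ¬ c = q := hcq
        simp [h1, h2, h3, hm1]
      · -- witness c
        apply Finset.prod_eq_zero (Finset.mem_univ c)
        have h1 : ¬ b = c := fun h => hcp (h.symm.trans hbp)
        have h2 : ¬ p = c := fun h => hcp h.symm
        have h3 : ¬ q = c := fun h => hcq h.symm
        simp [h1, h2, h3, hm1]
    · by_cases hbq : b = q
      · have hcp : ¬ c = p := fun h => hcase.2 hbq h
        by_cases hcq : c = q
        · -- witness p
          apply Finset.prod_eq_zero (Finset.mem_univ p)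
          have h1 : ¬ b = p := hbp
          have h2 : ¬ c = p := hcp
          have h3 : ¬ q = p := fun h => hpq h.symm
          simp [h1, h2, h3, hm1]
        · -- witness c
          apply Finset.prod_eq_zero (Finset.mem_univ c)
          have h1 : ¬ b = c := fun h => hcq (h.symm.trans hbq)
          have h2 : ¬ p = c := fun h => hcp h.symm
          have h3 : ¬ q = c := fun h => hcq h.symm
          simp [h1, h2, h3, hm1]
      · by_cases hbc : c = b
        · -- witness p
          apply Finset.prod_eq_zero (Finset.mem_univ p)
          have h1 : ¬ b = p := hbp
          have h2 : ¬ c = p := fun h => hbp (hbc.symm.trans h)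
          have h3 : ¬ q = p := fun h => hpq h.symm
          simp [h1, h2, h3, hm1]
        · -- witness b
          apply Finset.prod_eq_zero (Finset.mem_univ b)
          have h2 : ¬ p = b := fun h => hbp h.symm
          have h3 : ¬ q = b := fun h => hbq h.symm
          simp [hbc, h2, h3, hm1]

end comb

lemma sum_split {d : ℕ} (G : Fin d → Fin d → ℝ) (hsymm : ∀ p q, G p q = G q p) :
    ∑ p : Fin d, ∑ q : Fin d, G p q =
      (∑ p : Fin d, G p p) + 2 * ∑ p : Fin d, ∑ q ∈ Finset.Iio p, G p q := by
  have htri : ∀ p q : Fin d, G p q =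
      (if q < p then G p q else 0) + (if q = p then G p q else 0) +
        (if p < q then G p q else 0) := by
    intro p q
    rcases lt_trichotomy p q with h | h | h
    · simp [h, asymm h, h.ne']
    · simp [h, lt_irrefl]
    · simp [h, asymm h, h.ne]
  have hIio : ∀ p : Fin d, (Finset.Iio p) = Finset.univ.filter (fun q => q < p) := by
    intro p; ext q; simp
  have h1 : ∀ p : Fin d, ∑ q : Fin d, (if q < p then G p q else 0) =
      ∑ q ∈ Finset.Iio p, G p q := by
    intro p; rw [hIio, Finset.sum_filter]
  have h2 : ∀ p : Fin d, ∑ q : Fin d, (if q = p then G p q else 0) = G p p := by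
    intro p; rw [Finset.sum_ite_eq' Finset.univ p (G p)]; simp
  have h3 : ∑ p : Fin d, ∑ q : Fin d, (if p < q then G p q else 0) =
      ∑ p : Fin d, ∑ q ∈ Finset.Iio p, G p q := by
    rw [Finset.sum_comm]
    refine Finset.sum_congr rfl fun q _ => ?_
    rw [← h1 q]
    refine Finset.sum_congr rfl fun p _ => ?_
    by_cases h : p < q <;> simp [h, hsymm p q]
  calc ∑ p : Fin d, ∑ q : Fin d, G p q
      = ∑ p : Fin d, ∑ q : Fin d,
        ((if q < p then G p q else 0) + (if q = p then G p q else 0) +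
          (if p < q then G p q else 0)) := by
        refine Finset.sum_congr rfl fun p _ => Finset.sum_congr rfl fun q _ => htri p q
    _ = (∑ p : Fin d, ∑ q ∈ Finset.Iio p, G p q) + (∑ p : Fin d, G p p) +
        ∑ p : Fin d, ∑ q ∈ Finset.Iio p, G p q := by
        simp only [Finset.sum_add_distrib]
        rw [h3]
        congr 1
        congr 1
        · exact Finset.sum_congr rfl fun p _ => h1 p
        · exact Finset.sum_congr rfl fun p _ => h2 p
    _ = (∑ p : Fin d, G p p) + 2 * ∑ p : Fin d, ∑ q ∈ Finset.Iio p, G p q := by ring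

lemma abs_pow_le_one_add_pow_four (x : ℝ) {e : ℕ} (he : e ≤ 4) : |x| ^ e ≤ 1 + x ^ 4 := by
  have h4 : x ^ 4 = |x| ^ 4 := by
    rw [← abs_pow, abs_of_nonneg (by positivity)]
  by_cases hx : |x| ≤ 1
  · have : |x| ^ e ≤ 1 := pow_le_one₀ (abs_nonneg x) hx
    nlinarith [pow_nonneg (abs_nonneg x) 4]
  · push_neg at hx
    have : |x| ^ e ≤ |x| ^ 4 := pow_le_pow_right₀ hx.le he
    nlinarith

section prob2
variable {M d : ℕ} {Ω : Type*} [MeasureSpace Ω] [IsProbabilityMeasure (ℙ : Measure Ω)]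
  (g : Fin M → Fin d → Ω → ℝ)

lemma integrable_pow_g (hmeas : ∀ n i, Measurable (g n i))
    (hfourth : ∀ n i, Integrable (fun ω => (g n i ω) ^ 4) ℙ)
    (n : Fin M) (i : Fin d) {e : ℕ} (he : e ≤ 4) :
    Integrable (fun ω => (g n i ω) ^ e) ℙ := by
  refine Integrable.mono' ((integrable_const (1 : ℝ)).add (hfourth n i))
    ((hmeas n i).pow_const e).aestronglyMeasurable (ae_of_all _ fun ω => ?_)
  rw [Real.norm_eq_abs, abs_pow]
  exact abs_pow_le_one_add_pow_four _ he

lemma moment_prod_g (hmeas : ∀ n i, Measurable (g n i))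
    (hindep : iIndepFun (fun p : Fin M × Fin d => g p.1 p.2) ℙ)
    (hfourth : ∀ n i, Integrable (fun ω => (g n i ω) ^ 4) ℙ)
    (e : Fin M × Fin d → ℕ) (he : ∀ p, e p ≤ 4) :
    Integrable (fun ω => ∏ p : Fin M × Fin d, (g p.1 p.2 ω) ^ (e p)) ℙ ∧
      ∫ ω, ∏ p : Fin M × Fin d, (g p.1 p.2 ω) ^ (e p) ∂ℙ =
        ∏ p : Fin M × Fin d, ∫ ω, (g p.1 p.2 ω) ^ (e p) ∂ℙ := by
  have hind2 : iIndepFun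
      (fun (p : Fin M × Fin d) ω => (g p.1 p.2 ω) ^ (e p)) ℙ :=
    hindep.comp (fun p x => x ^ e p) (fun p => measurable_id.pow_const (e p))
  exact integral_prod_of_indep _ hind2
    (fun p => (hmeas p.1 p.2).pow_const (e p))
    (fun p => integrable_pow_g g hmeas hfourth p.1 p.2 (he p)) Finset.univ

end prob2

/-- exponent pattern of the estimator term -/
def expnt {M d : ℕ} (j : Fin M → Fin d) (i : Fin d) (p : Fin M × Fin d) : ℕ :=
  (if j p.1 = p.2 then 1 else 0) + (if i = p.2 then 1 else 0)

lemma expnt_le_two {M d : ℕ} (j : Fin M → Fin d) (i : Fin d) (p : Fin M × Fin d) :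
    expnt j i p ≤ 2 := by
  unfold expnt; split_ifs <;> norm_num

lemma prodform {M d : ℕ} {Ω : Type*} (g : Fin M → Fin d → Ω → ℝ)
    (j : Fin M → Fin d) (i : Fin d) (ω : Ω) :
    (∏ t : Fin M, g t (j t) ω * g t i ω) =
      ∏ p : Fin M × Fin d, (g p.1 p.2 ω) ^ expnt j i p := by
  rw [Fintype.prod_prod_type]
  refine Finset.prod_congr rfl fun t _ => ?_
  simp only [expnt, pow_add, Finset.prod_mul_distrib]
  rw [prod_pow_ite (fun r => g t r ω) (j t), prod_pow_ite (fun r => g t r ω) i]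

/-- common moments -/
noncomputable def mome {M d : ℕ} {Ω : Type*} [MeasureSpace Ω]
    (g : Fin M → Fin d → Ω → ℝ) (hM : 1 ≤ M) (hd : 1 ≤ d) (k : ℕ) : ℝ :=
  ∫ ω, (g ⟨0, hM⟩ ⟨0, hd⟩ ω) ^ k ∂ℙ

noncomputable def Vterm {M d : ℕ} (a : (Fin (M + 1) → Fin d) → ℝ)
    {Ω : Type*} [MeasureSpace Ω] (g : Fin M → Fin d → Ω → ℝ)
    (hM : 1 ≤ M) (hd : 1 ≤ d) (i i' : Fin d) : ℝ :=
  ∑ j : Fin M → Fin d, ∑ k : Fin M → Fin d,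
    (a (Fin.snoc j i) * a (Fin.snoc k i')) *
      ∏ p : Fin M × Fin d, mome g hM hd (expnt j i p + expnt k i' p)

section prob
variable {M d : ℕ} {Ω : Type*} [MeasureSpace Ω] [IsProbabilityMeasure (ℙ : Measure Ω)]
  (g : Fin M → Fin d → Ω → ℝ) (hM : 1 ≤ M) (hd : 1 ≤ d)

lemma mome_eq (hident : ∀ n i n' i', IdentDistrib (g n i) (g n' i') ℙ ℙ)
    (n : Fin M) (i : Fin d) (k : ℕ) :
    ∫ ω, (g n i ω) ^ k ∂ℙ = mome g hM hd k :=
  ((hident n i ⟨0, hM⟩ ⟨0, hd⟩).comp (measurable_id.pow_const k)).integral_eq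

lemma mome_zero : mome g hM hd 0 = 1 := by simp [mome]

lemma mome_one (hmean : ∀ n i, ∫ ω, g n i ω ∂ℙ = 0) : mome g hM hd 1 = 0 := by
  simpa [mome] using hmean ⟨0, hM⟩ ⟨0, hd⟩

lemma mome_two (hsecond : ∀ n i, ∫ ω, (g n i ω) ^ 2 ∂ℙ = 1) : mome g hM hd 2 = 1 :=
  hsecond _ _

lemma mome_four {m4 : ℝ} (hm4 : ∀ n i, ∫ ω, (g n i ω) ^ 4 ∂ℙ = m4) :
    mome g hM hd 4 = m4 := hm4 _ _

variable (hmeas : ∀ n i, Measurable (g n i))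
  (hindep : iIndepFun (fun p : Fin M × Fin d => g p.1 p.2) ℙ)
  (hident : ∀ n i n' i', IdentDistrib (g n i) (g n' i') ℙ ℙ)
  (hfourth : ∀ n i, Integrable (fun ω => (g n i ω) ^ 4) ℙ)

include hmeas hindep hfourth

lemma integrable_term1 (j : Fin M → Fin d) (i : Fin d) :
    Integrable (fun ω => ∏ p : Fin M × Fin d, (g p.1 p.2 ω) ^ expnt j i p) ℙ :=
  (moment_prod_g g hmeas hindep hfourth _
    (fun p => le_trans (expnt_le_two j i p) (by norm_num))).1

lemma integrable_term2 (j k : Fin M → Fin d) (i i' : Fin d) :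
    Integrable (fun ω =>
      ∏ p : Fin M × Fin d, (g p.1 p.2 ω) ^ (expnt j i p + expnt k i' p)) ℙ :=
  (moment_prod_g g hmeas hindep hfourth _
    (fun p => le_trans (Nat.add_le_add (expnt_le_two j i p) (expnt_le_two k i' p))
      (by norm_num))).1

include hident

lemma integral_term1 (j : Fin M → Fin d) (i : Fin d) :
    ∫ ω, ∏ p : Fin M × Fin d, (g p.1 p.2 ω) ^ expnt j i p ∂ℙ =
      ∏ p : Fin M × Fin d, mome g hM hd (expnt j i p) := by
  rw [(moment_prod_g g hmeas hindep hfourth _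
    (fun p => le_trans (expnt_le_two j i p) (by norm_num))).2]
  exact Finset.prod_congr rfl fun p _ => mome_eq g hM hd hident p.1 p.2 _

lemma integral_term2 (j k : Fin M → Fin d) (i i' : Fin d) :
    ∫ ω, ∏ p : Fin M × Fin d, (g p.1 p.2 ω) ^ (expnt j i p + expnt k i' p) ∂ℙ =
      ∏ p : Fin M × Fin d, mome g hM hd (expnt j i p + expnt k i' p) := by
  rw [(moment_prod_g g hmeas hindep hfourth _
    (fun p => le_trans (Nat.add_le_add (expnt_le_two j i p) (expnt_le_two k i' p))
      (by norm_num))).2]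
  exact Finset.prod_congr rfl fun p _ => mome_eq g hM hd hident p.1 p.2 _

end prob
lemma snoc_const {M : ℕ} {α : Sort*} (i : α) :
    (Fin.snoc (fun _ : Fin M => i) i : Fin (M + 1) → α) = fun _ => i := by
  funext t; simp [Fin.snoc]

lemma pair_cond_iff {α : Type*} {p q : α} (hpq : p ≠ q) (b c : α) :
    ((b = p ∧ c = q) ∨ (b = q ∧ c = p)) ↔
      ((b = p ∨ b = q) ∧ (c = p ∨ c = q) ∧ b ≠ c) := by
  constructor
  · rintro (⟨rfl, rfl⟩ | ⟨rfl, rfl⟩)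
    · exact ⟨Or.inl rfl, Or.inr rfl, hpq⟩
    · exact ⟨Or.inr rfl, Or.inl rfl, hpq.symm⟩
  · rintro ⟨hb | hb, hc | hc, hne⟩
    · exact absurd (hb.trans hc.symm) hne
    · exact Or.inl ⟨hb, hc⟩
    · exact Or.inr ⟨hb, hc⟩
    · exact absurd (hb.trans hc.symm) hne

section vterm
variable {M d : ℕ} {Ω : Type*} [MeasureSpace Ω] [IsProbabilityMeasure (ℙ : Measure Ω)]
  (a : (Fin (M + 1) → Fin d) → ℝ)
  (g : Fin M → Fin d → Ω → ℝ) (hM : 1 ≤ M) (hd : 1 ≤ d)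

lemma Vterm_symm (i i' : Fin d) : Vterm a g hM hd i i' = Vterm a g hM hd i' i := by
  unfold Vterm
  rw [Finset.sum_comm]
  refine Finset.sum_congr rfl fun k _ => Finset.sum_congr rfl fun j _ => ?_
  rw [mul_comm (a (Fin.snoc j i)) (a (Fin.snoc k i'))]
  congr 1
  exact Finset.prod_congr rfl fun p _ => by rw [add_comm]

variable (hmean : ∀ n i, ∫ ω, g n i ω ∂ℙ = 0)
  (hsecond : ∀ n i, ∫ ω, (g n i ω) ^ 2 ∂ℙ = 1)
  {m4 : ℝ} (hm4 : ∀ n i, ∫ ω, (g n i ω) ^ 4 ∂ℙ = m4)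

include hmean hsecond hm4

lemma Vterm_diag (p : Fin d) :
    Vterm a g hM hd p p =
      ∑ s ∈ Finset.range (M + 1), m4 ^ s *
        ∑ j ∈ Finset.univ.filter (fun j : Fin M → Fin d =>
          (Finset.univ.filter (fun t => j t = p)).card = s), (a (Fin.snoc j p)) ^ 2 := by
  have hQ : ∀ j k : Fin M → Fin d,
      (∏ q : Fin M × Fin d, mome g hM hd (expnt j p q + expnt k p q)) =
        if j = k then ∏ t : Fin M, (if j t = p then m4 else 1) else 0 := by
    intro j k
    rw [Fintype.prod_prod_type]
    have h1 : ∀ t : Fin M,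
        (∏ r : Fin d, mome g hM hd (expnt j p (t, r) + expnt k p (t, r))) =
          if j t = k t then (if j t = p then m4 else 1) else 0 := by
      intro t
      have h := quad_diag (mome g hM hd) (mome_zero g hM hd) (mome_one g hM hd hmean)
        (mome_two g hM hd hsecond) p (j t) (k t)
      rw [mome_four g hM hd hm4] at h
      rw [← h]
      exact Finset.prod_congr rfl fun r _ => by simp only [expnt]
    rw [Finset.prod_congr rfl fun t _ => h1 t, prod_ite_eq_fun]
  unfold Vterm
  have hsum : ∀ j : Fin M → Fin d,
      (∑ k : Fin M → Fin d, (a (Fin.snoc j p) * a (Fin.snoc k p)) *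
        ∏ q : Fin M × Fin d, mome g hM hd (expnt j p q + expnt k p q)) =
      (a (Fin.snoc j p)) ^ 2 * ∏ t : Fin M, (if j t = p then m4 else 1) := by
    intro j
    rw [Finset.sum_congr rfl fun k _ => by
      rw [hQ j k, mul_ite, mul_zero]]
    rw [Finset.sum_ite_eq Finset.univ j
      (fun k => a (Fin.snoc j p) * a (Fin.snoc k p) * ∏ t : Fin M, (if j t = p then m4 else 1))]
    simp [sq]
  rw [Finset.sum_congr rfl fun j _ => hsum j]
  have hpow : ∀ j : Fin M → Fin d,
      (∏ t : Fin M, (if j t = p then m4 else 1)) =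
        m4 ^ (Finset.univ.filter (fun t => j t = p)).card := by
    intro j
    rw [Finset.prod_ite (fun _ => m4) (fun _ => (1 : ℝ))]
    simp
  rw [Finset.sum_congr rfl fun j _ => by rw [hpow j]]
  have hmaps : ∀ j : Fin M → Fin d, j ∈ Finset.univ →
      (Finset.univ.filter (fun t => j t = p)).card ∈ Finset.range (M + 1) := by
    intro j _
    refine Finset.mem_range.mpr (lt_of_le_of_lt ?_ (Nat.lt_succ_self M))
    calc (Finset.univ.filter (fun t => j t = p)).card
        ≤ (Finset.univ : Finset (Fin M)).card := Finset.card_filter_le _ _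
      _ = M := by simp
  rw [← Finset.sum_fiberwise_of_maps_to hmaps
    (fun j => (a (Fin.snoc j p)) ^ 2 * m4 ^ (Finset.univ.filter (fun t => j t = p)).card)]
  refine Finset.sum_congr rfl fun s _ => ?_
  rw [Finset.mul_sum]
  refine Finset.sum_congr rfl fun j hj => ?_
  rw [(Finset.mem_filter.mp hj).2, mul_comm]

lemma Vterm_off {p q : Fin d} (hpq : p ≠ q) :
    Vterm a g hM hd p q =
      ∑ jk ∈ Finset.univ.filter (fun jk : (Fin M → Fin d) × (Fin M → Fin d) =>
          ∀ t, (jk.1 t = p ∨ jk.1 t = q) ∧ (jk.2 t = p ∨ jk.2 t = q) ∧ jk.1 t ≠ jk.2 t),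
        a (Fin.snoc jk.1 p) * a (Fin.snoc jk.2 q) := by
  have hQ : ∀ j k : Fin M → Fin d,
      (∏ r : Fin M × Fin d, mome g hM hd (expnt j p r + expnt k q r)) =
        if (∀ t, (j t = p ∨ j t = q) ∧ (k t = p ∨ k t = q) ∧ j t ≠ k t)
          then (1 : ℝ) else 0 := by
    intro j k
    rw [Fintype.prod_prod_type]
    have h1 : ∀ t : Fin M,
        (∏ r : Fin d, mome g hM hd (expnt j p (t, r) + expnt k q (t, r))) =
          if (j t = p ∧ k t = q) ∨ (j t = q ∧ k t = p) then (1 : ℝ) else 0 := by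
      intro t
      have h := quad_off (mome g hM hd) (mome_zero g hM hd) (mome_one g hM hd hmean)
        (mome_two g hM hd hsecond) hpq (j t) (k t)
      rw [← h]
      exact Finset.prod_congr rfl fun r _ => by simp only [expnt]
    rw [Finset.prod_congr rfl fun t _ => h1 t, prod_ite_one_zero]
    have hcond : (∀ t, (j t = p ∧ k t = q) ∨ (j t = q ∧ k t = p)) =
        (∀ t, (j t = p ∨ j t = q) ∧ (k t = p ∨ k t = q) ∧ j t ≠ k t) :=
      propext (forall_congr' fun t => pair_cond_iff hpq (j t) (k t))
    simp only [hcond]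
  rw [Finset.sum_filter, Fintype.sum_prod_type]
  unfold Vterm
  refine Finset.sum_congr rfl fun j _ => Finset.sum_congr rfl fun k _ => ?_
  rw [hQ j k, mul_ite, mul_one, mul_zero]

end vterm

theorem trace_estimator_variance
    {M d : ℕ} (hM : 1 ≤ M) (hd : 1 ≤ d)
    (a : (Fin (M + 1) → Fin d) → ℝ)
    {Ω : Type*} [MeasureSpace Ω] [IsProbabilityMeasure (ℙ : Measure Ω)]
    (g : Fin M → Fin d → Ω → ℝ)
    (hmeas : ∀ n i, Measurable (g n i))
    (hindep : iIndepFun (fun p : Fin M × Fin d => g p.1 p.2) ℙ)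
    (hident : ∀ n i n' i', IdentDistrib (g n i) (g n' i') ℙ ℙ)
    (hmean : ∀ n i, ∫ ω, g n i ω ∂ℙ = 0)
    (hsecond : ∀ n i, ∫ ω, (g n i ω) ^ 2 ∂ℙ = 1)
    (hfourth : ∀ n i, Integrable (fun ω => (g n i ω) ^ 4) ℙ)
    (m4 : ℝ) (hm4 : ∀ n i, ∫ ω, (g n i ω) ^ 4 ∂ℙ = m4)
    :
    variance (traceEstimator a g) ℙ =
      (∑ p : Fin d,
        ((∑ s ∈ Finset.range (M + 1), m4 ^ s *
          (∑ j ∈ Finset.univ.filter (fun j : Fin M → Fin d =>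
              (Finset.univ.filter (fun t => j t = p)).card = s), (a (Fin.snoc j p)) ^ 2)) -
          (a (fun _ => p)) ^ 2)) +
      2 * ∑ p : Fin d, ∑ q ∈ Finset.Iio p,
        ((∑ jk ∈ Finset.univ.filter (fun jk : (Fin M → Fin d) × (Fin M → Fin d) =>
          ∀ t, (jk.1 t = p ∨ jk.1 t = q) ∧ (jk.2 t = p ∨ jk.2 t = q) ∧ jk.1 t ≠ jk.2 t),
        a (Fin.snoc jk.1 p) * a (Fin.snoc jk.2 q)) -
          a (fun _ => p) * a (fun _ => q)) := by
  classical
  -- measurability of the estimator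
  have hXmeas : Measurable (traceEstimator a g) := by
    unfold traceEstimator diagEstimator
    exact Finset.measurable_sum _ fun i _ => Finset.measurable_sum _ fun j _ =>
      (Finset.measurable_prod _ fun t _ => ((hmeas t (j t)).mul (hmeas t i))).const_mul _
  -- the estimator in exponent form
  have hXeq : ∀ ω, traceEstimator a g ω =
      ∑ u : Fin d × (Fin M → Fin d), a (Fin.snoc u.2 u.1) *
        ∏ p : Fin M × Fin d, (g p.1 p.2 ω) ^ expnt u.2 u.1 p := by
    intro ω
    unfold traceEstimator diagEstimator
    rw [Fintype.sum_prod_type]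
    exact Finset.sum_congr rfl fun i _ => Finset.sum_congr rfl fun j _ => by
      rw [prodform]
  have hint1 : ∀ u : Fin d × (Fin M → Fin d),
      Integrable (fun ω => a (Fin.snoc u.2 u.1) *
        ∏ p : Fin M × Fin d, (g p.1 p.2 ω) ^ expnt u.2 u.1 p) ℙ :=
    fun u => (integrable_term1 g hmeas hindep hfourth u.2 u.1).const_mul _
  -- the mean
  have hEX : ∫ ω, traceEstimator a g ω ∂ℙ = ∑ p : Fin d, a (fun _ => p) := by
    calc ∫ ω, traceEstimator a g ω ∂ℙ
        = ∫ ω, ∑ u : Fin d × (Fin M → Fin d), a (Fin.snoc u.2 u.1) *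
            ∏ p : Fin M × Fin d, (g p.1 p.2 ω) ^ expnt u.2 u.1 p ∂ℙ := by
          exact integral_congr_ae (ae_of_all _ hXeq)
      _ = ∑ u : Fin d × (Fin M → Fin d), ∫ ω, a (Fin.snoc u.2 u.1) *
            ∏ p : Fin M × Fin d, (g p.1 p.2 ω) ^ expnt u.2 u.1 p ∂ℙ :=
          integral_finset_sum _ fun u _ => hint1 u
      _ = ∑ u : Fin d × (Fin M → Fin d), a (Fin.snoc u.2 u.1) *
            (if u.2 = (fun _ => u.1) then 1 else 0) := by
          refine Finset.sum_congr rfl fun u _ => ?_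
          rw [integral_const_mul, integral_term1 g hM hd hmeas hindep hident hfourth u.2 u.1]
          congr 1
          rw [Fintype.prod_prod_type]
          have h1 : ∀ t : Fin M, (∏ r : Fin d, mome g hM hd (expnt u.2 u.1 (t, r))) =
              if u.2 t = u.1 then (1 : ℝ) else 0 := by
            intro t
            have h := pair_moment (mome g hM hd) (mome_zero g hM hd)
              (mome_one g hM hd hmean) (mome_two g hM hd hsecond) (u.2 t) u.1
            rw [← h]
            exact Finset.prod_congr rfl fun r _ => by simp only [expnt]
          rw [Finset.prod_congr rfl fun t _ => h1 t, prod_ite_one_zero]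
          have hcond : (∀ t, u.2 t = u.1) = (u.2 = fun _ => u.1) :=
            propext ⟨fun h => funext h, fun h t => congrFun h t⟩
          simp only [hcond]
      _ = ∑ p : Fin d, a (fun _ => p) := by
          rw [Fintype.sum_prod_type]
          refine Finset.sum_congr rfl fun i _ => ?_
          rw [Finset.sum_congr rfl fun j (_ : j ∈ Finset.univ) => by
            rw [mul_ite, mul_one, mul_zero]]
          rw [Finset.sum_ite_eq' Finset.univ (fun _ => i) (fun j => a (Fin.snoc j i))]
          simp [snoc_const]
  -- the square in exponent form
  have hsq : ∀ ω, (traceEstimator a g ω) ^ 2 =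
      ∑ u : Fin d × (Fin M → Fin d), ∑ v : Fin d × (Fin M → Fin d),
        (a (Fin.snoc u.2 u.1) * a (Fin.snoc v.2 v.1)) *
          ∏ p : Fin M × Fin d, (g p.1 p.2 ω) ^ (expnt u.2 u.1 p + expnt v.2 v.1 p) := by
    intro ω
    rw [sq, hXeq ω, Finset.sum_mul_sum]
    refine Finset.sum_congr rfl fun u _ => Finset.sum_congr rfl fun v _ => ?_
    rw [mul_mul_mul_comm, ← Finset.prod_mul_distrib]
    congr 1
    exact Finset.prod_congr rfl fun p _ => (pow_add _ _ _).symm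
  have hint2 : ∀ u v : Fin d × (Fin M → Fin d),
      Integrable (fun ω => (a (Fin.snoc u.2 u.1) * a (Fin.snoc v.2 v.1)) *
        ∏ p : Fin M × Fin d, (g p.1 p.2 ω) ^ (expnt u.2 u.1 p + expnt v.2 v.1 p)) ℙ :=
    fun u v => (integrable_term2 g hmeas hindep hfourth u.2 v.2 u.1 v.1).const_mul _
  have hintX2 : Integrable (fun ω => (traceEstimator a g ω) ^ 2) ℙ := by
    rw [show (fun ω => (traceEstimator a g ω) ^ 2) =
      fun ω => ∑ u : Fin d × (Fin M → Fin d), ∑ v : Fin d × (Fin M → Fin d),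
        (a (Fin.snoc u.2 u.1) * a (Fin.snoc v.2 v.1)) *
          ∏ p : Fin M × Fin d, (g p.1 p.2 ω) ^ (expnt u.2 u.1 p + expnt v.2 v.1 p)
      from funext hsq]
    exact integrable_finset_sum _ fun u _ => integrable_finset_sum _ fun v _ => hint2 u v
  -- second moment
  have hEX2 : ∫ ω, (traceEstimator a g ω) ^ 2 ∂ℙ =
      ∑ i : Fin d, ∑ i' : Fin d, Vterm a g hM hd i i' := by
    calc ∫ ω, (traceEstimator a g ω) ^ 2 ∂ℙ
        = ∫ ω, ∑ u : Fin d × (Fin M → Fin d), ∑ v : Fin d × (Fin M → Fin d),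
            (a (Fin.snoc u.2 u.1) * a (Fin.snoc v.2 v.1)) *
              ∏ p : Fin M × Fin d, (g p.1 p.2 ω) ^ (expnt u.2 u.1 p + expnt v.2 v.1 p) ∂ℙ :=
          integral_congr_ae (ae_of_all _ hsq)
      _ = ∑ u : Fin d × (Fin M → Fin d), ∑ v : Fin d × (Fin M → Fin d),
            ∫ ω, (a (Fin.snoc u.2 u.1) * a (Fin.snoc v.2 v.1)) *
              ∏ p : Fin M × Fin d, (g p.1 p.2 ω) ^ (expnt u.2 u.1 p + expnt v.2 v.1 p) ∂ℙ := by
          rw [integral_finset_sum _ fun u _ => integrable_finset_sum _ fun v _ => hint2 u v]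
          exact Finset.sum_congr rfl fun u _ =>
            integral_finset_sum _ fun v _ => hint2 u v
      _ = ∑ u : Fin d × (Fin M → Fin d), ∑ v : Fin d × (Fin M → Fin d),
            (a (Fin.snoc u.2 u.1) * a (Fin.snoc v.2 v.1)) *
              ∏ p : Fin M × Fin d, mome g hM hd (expnt u.2 u.1 p + expnt v.2 v.1 p) := by
          refine Finset.sum_congr rfl fun u _ => Finset.sum_congr rfl fun v _ => ?_
          rw [integral_const_mul,
            integral_term2 g hM hd hmeas hindep hident hfourth u.2 v.2 u.1 v.1]
      _ = ∑ i : Fin d, ∑ j : Fin M → Fin d, ∑ i' : Fin d, ∑ k : Fin M → Fin d,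
            (a (Fin.snoc j i) * a (Fin.snoc k i')) *
              ∏ p : Fin M × Fin d, mome g hM hd (expnt j i p + expnt k i' p) := by
          rw [Fintype.sum_prod_type]
          exact Finset.sum_congr rfl fun i _ => Finset.sum_congr rfl fun j _ => by
            rw [Fintype.sum_prod_type]
      _ = ∑ i : Fin d, ∑ i' : Fin d, Vterm a g hM hd i i' := by
          refine Finset.sum_congr rfl fun i _ => ?_
          rw [Finset.sum_comm]
          exact Finset.sum_congr rfl fun i' _ => rfl
  -- conclude
  have hMem : MemLp (traceEstimator a g) 2 ℙ :=
    (memLp_two_iff_integrable_sq hXmeas.aestronglyMeasurable).mpr hintX2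
  rw [ProbabilityTheory.variance_eq_sub hMem]
  have hpow2 : ∫ ω, (traceEstimator a g ^ 2) ω ∂ℙ = ∫ ω, (traceEstimator a g ω) ^ 2 ∂ℙ := by
    simp [Pi.pow_apply]
  rw [hpow2, hEX2, hEX]
  rw [sum_split (fun i i' => Vterm a g hM hd i i') (fun p q => Vterm_symm a g hM hd p q)]
  rw [sq, Finset.sum_mul_sum,
    sum_split (fun p q => a (fun _ => p) * a (fun _ => q))
      (fun p q => mul_comm _ _)]
  have h1 : ∑ p : Fin d, Vterm a g hM hd p p =
      ∑ p : Fin d, ∑ s ∈ Finset.range (M + 1), m4 ^ s *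
        ∑ j ∈ Finset.univ.filter (fun j : Fin M → Fin d =>
          (Finset.univ.filter (fun t => j t = p)).card = s), (a (Fin.snoc j p)) ^ 2 :=
    Finset.sum_congr rfl fun p _ => Vterm_diag a g hM hd hmean hsecond hm4 p
  have h2 : ∑ p : Fin d, ∑ q ∈ Finset.Iio p, Vterm a g hM hd p q =
      ∑ p : Fin d, ∑ q ∈ Finset.Iio p,
        ∑ jk ∈ Finset.univ.filter (fun jk : (Fin M → Fin d) × (Fin M → Fin d) =>
          ∀ t, (jk.1 t = p ∨ jk.1 t = q) ∧ (jk.2 t = p ∨ jk.2 t = q) ∧ jk.1 t ≠ jk.2 t),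
          a (Fin.snoc jk.1 p) * a (Fin.snoc jk.2 q) :=
    Finset.sum_congr rfl fun p _ => Finset.sum_congr rfl fun q hq =>
      Vterm_off a g hM hd hmean hsecond hm4 (Finset.mem_Iio.mp hq).ne'
  rw [h1, h2]
  have h3 : ∀ p : Fin d, a (fun _ => p) * a (fun _ => p) = (a (fun _ => p)) ^ 2 :=
    fun p => (sq _).symm
  simp only [h3, Finset.sum_sub_distrib, mul_sub]
  ring
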